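/- Let u ∈ H²([0,1]) attain its minimum u_min at a point x* ∈ [0,1]. Then for every x ∈ [0,1], u(x) − u_min ≤ (2/3) ‖u''‖_{L²([0,1])} |x − x*|^{3/2}. -/

import Mathlib

open MeasureTheory Set

/-- If `u ∈ H²([0,1])` attains its minimum at `x* ∈ [0,1]` (with `u'(x*) = 0`),
then for every `x ∈ [0,1]`, `u x - u_min ≤ (2/3) ‖u''‖_{L²} |x - x*|^{3/2}`. -/
theorem stmt0 (u u' u'' : ℝ → ℝ)
    (hu : ∀ x ∈ Icc (0:ℝ) 1, HasDerivAt u (u' x) x)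
    (hu' : ∀ x ∈ Icc (0:ℝ) 1, HasDerivAt u' (u'' x) x)
    (hu''L2 : IntegrableOn (fun x => (u'' x) ^ 2) (Icc (0:ℝ) 1))
    (xs : ℝ) (hxs : xs ∈ Icc (0:ℝ) 1)
    (hmin : ∀ x ∈ Icc (0:ℝ) 1, u xs ≤ u x)
    (hd0 : u' xs = 0)
    (x : ℝ) (hx : x ∈ Icc (0:ℝ) 1) :
    u x - u xs ≤ (2/3) * (∫ s in Icc (0:ℝ) 1, (u'' s) ^ 2) ^ ((1:ℝ)/2)
      * |x - xs| ^ ((3:ℝ)/2) := by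
  set C : ℝ := (∫ s in Icc (0:ℝ) 1, (u'' s) ^ 2) ^ ((1:ℝ)/2) with hCdef
  have hInonneg : 0 ≤ ∫ s in Icc (0:ℝ) 1, (u'' s) ^ 2 :=
    integral_nonneg fun s => sq_nonneg _
  have hC0 : 0 ≤ C := Real.rpow_nonneg hInonneg _
  -- measurability of u'' on [0,1]
  have hmeas : AEStronglyMeasurable u'' (volume.restrict (Icc (0:ℝ) 1)) := by
    have h1 : (volume : Measure ℝ).restrict (Icc (0:ℝ) 1)
        = volume.restrict (Ioo (0:ℝ) 1) :=
      (Measure.restrict_congr_set Ioo_ae_eq_Icc).symm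
    rw [h1]
    refine (measurable_deriv u').aestronglyMeasurable.congr ?_
    filter_upwards [ae_restrict_mem measurableSet_Ioo] with t ht
    exact (hu' t (Ioo_subset_Icc_self ht)).deriv
  -- integrability of u'' on [0,1]
  have hint : IntegrableOn u'' (Icc (0:ℝ) 1) := by
    have hgi : IntegrableOn (fun s => (u'' s) ^ 2 + 1) (Icc (0:ℝ) 1) :=
      hu''L2.add (integrableOn_const (by simp))
    refine Integrable.mono' hgi hmeas ?_
    filter_upwards with t
    rw [Real.norm_eq_abs]
    nlinarith [sq_nonneg (|u'' t| - 1), sq_abs (u'' t), abs_nonneg (u'' t)]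
  -- Cauchy-Schwarz estimate
  have hCS : ∀ a b : ℝ, 0 ≤ a → b ≤ 1 → a ≤ b →
      ∫ s in Ioc a b, |u'' s| ≤ C * (b - a) ^ ((1:ℝ)/2) := by
    intro a b ha hb hab
    have hsub : Ioc a b ⊆ Icc (0:ℝ) 1 := fun t ht =>
      ⟨le_trans ha (le_of_lt ht.1), le_trans ht.2 hb⟩
    have hmeas' : AEStronglyMeasurable u'' (volume.restrict (Ioc a b)) :=
      hmeas.mono_measure (Measure.restrict_mono hsub le_rfl)
    have hf2 : MemLp (fun s => |u'' s|) 2 (volume.restrict (Ioc a b)) := by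
      have h2 : IntegrableOn (fun s => |u'' s| ^ 2) (Ioc a b) := by
        simpa [sq_abs] using hu''L2.mono_set hsub
      have habs : AEStronglyMeasurable (fun s => |u'' s|) (volume.restrict (Ioc a b)) :=
        hmeas'.norm.congr (Filter.Eventually.of_forall fun s => (Real.norm_eq_abs _))
      exact (memLp_two_iff_integrable_sq habs).2 h2
    haveI : IsFiniteMeasure (volume.restrict (Ioc a b)) :=
      ⟨by rw [Measure.restrict_apply_univ]; exact measure_Ioc_lt_top⟩
    have hg2 : MemLp (fun _ : ℝ => (1:ℝ)) 2 (volume.restrict (Ioc a b)) :=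
      memLp_const 1
    have hpq : (2:ℝ).HolderConjugate 2 :=
      (Real.holderConjugate_iff_eq_conjExponent one_lt_two).2 (by norm_num)
    have h2e : ENNReal.ofReal (2:ℝ) = 2 := by norm_num
    have key := integral_mul_le_Lp_mul_Lq_of_nonneg (μ := volume.restrict (Ioc a b))
      hpq (f := fun s => |u'' s|) (g := fun _ => (1:ℝ))
      (Filter.Eventually.of_forall fun s => abs_nonneg _)
      (Filter.Eventually.of_forall fun s => zero_le_one)
      (h2e ▸ hf2) (h2e ▸ hg2)
    simp only [mul_one, one_pow, Real.rpow_two, sq_abs, Real.one_rpow, integral_const,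
      smul_eq_mul, Measure.real, Measure.restrict_apply_univ, Real.volume_Ioc,
      ENNReal.toReal_ofReal (sub_nonneg.2 hab)] at key
    refine key.trans ?_
    refine mul_le_mul_of_nonneg_right ?_ (Real.rpow_nonneg (sub_nonneg.2 hab) _)
    refine Real.rpow_le_rpow (integral_nonneg fun s => sq_nonneg _) ?_ (by norm_num)
    exact setIntegral_mono_set hu''L2
      (Filter.Eventually.of_forall fun s => sq_nonneg _)
      (HasSubset.Subset.eventuallyLE hsub)
  -- pointwise bound on u'
  have keyA : ∀ t ∈ Icc (0:ℝ) 1, |u' t| ≤ C * |t - xs| ^ ((1:ℝ)/2) := by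
    intro t ht
    have hsub := uIcc_subset_Icc hxs ht
    have hII : IntervalIntegrable u'' volume xs t :=
      (hint.mono_set hsub).intervalIntegrable
    have hftc : ∫ s in xs..t, u'' s = u' t - u' xs :=
      intervalIntegral.integral_eq_sub_of_hasDerivAt
        (fun s hs => hu' s (hsub hs)) hII
    have hut : u' t = ∫ s in xs..t, u'' s := by rw [hftc, hd0, sub_zero]
    rcases le_total xs t with h | h
    · calc |u' t| = |∫ s in xs..t, u'' s| := by rw [hut]
        _ ≤ ∫ s in xs..t, |u'' s| :=
            intervalIntegral.abs_integral_le_integral_abs h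
        _ = ∫ s in Ioc xs t, |u'' s| := intervalIntegral.integral_of_le h
        _ ≤ C * (t - xs) ^ ((1:ℝ)/2) := hCS xs t hxs.1 ht.2 h
        _ = C * |t - xs| ^ ((1:ℝ)/2) := by rw [abs_of_nonneg (sub_nonneg.2 h)]
    · calc |u' t| = |∫ s in t..xs, u'' s| := by
            rw [hut, intervalIntegral.integral_symm t xs, abs_neg]
        _ ≤ ∫ s in t..xs, |u'' s| :=
            intervalIntegral.abs_integral_le_integral_abs h
        _ = ∫ s in Ioc t xs, |u'' s| := intervalIntegral.integral_of_le h
        _ ≤ C * (xs - t) ^ ((1:ℝ)/2) := hCS t xs ht.1 hxs.2 h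
        _ = C * |t - xs| ^ ((1:ℝ)/2) := by rw [abs_sub_comm, abs_of_nonneg (sub_nonneg.2 h)]
  -- FTC for u
  have hcontu' : ContinuousOn u' (Icc (0:ℝ) 1) := fun s hs =>
    (hu' s hs).continuousAt.continuousWithinAt
  have hsubx := uIcc_subset_Icc hxs hx
  have hu'II : IntervalIntegrable u' volume xs x :=
    (hcontu'.mono hsubx).intervalIntegrable
  have hftc2 : ∫ t in xs..x, u' t = u x - u xs :=
    intervalIntegral.integral_eq_sub_of_hasDerivAt (fun s hs => hu s (hsubx hs)) hu'II
  have hsqrt_int : ∀ c : ℝ, ∫ t in (0:ℝ)..c, Real.sqrt t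
      = (c ^ ((3:ℝ)/2) - (0:ℝ) ^ ((3:ℝ)/2)) / ((1:ℝ)/2 + 1) := by
    intro c
    rw [show (fun t => Real.sqrt t) = fun t : ℝ => t ^ ((1:ℝ)/2) from
      funext fun t => Real.sqrt_eq_rpow t]
    rw [integral_rpow (Or.inl (by norm_num))]
    norm_num
  rcases le_total xs x with hxge | hxle
  · -- x ≥ xs
    have hgc : Continuous fun t : ℝ => C * Real.sqrt (t - xs) :=
      continuous_const.mul (Real.continuous_sqrt.comp (continuous_id.sub continuous_const))
    have hmono : ∫ t in xs..x, u' t ≤ ∫ t in xs..x, C * Real.sqrt (t - xs) := by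
      refine intervalIntegral.integral_mono_on hxge hu'II (hgc.intervalIntegrable xs x) ?_
      intro t ht
      have ht' : t ∈ Icc (0:ℝ) 1 := ⟨le_trans hxs.1 ht.1, le_trans ht.2 hx.2⟩
      calc u' t ≤ |u' t| := le_abs_self _
        _ ≤ C * |t - xs| ^ ((1:ℝ)/2) := keyA t ht'
        _ = C * Real.sqrt (t - xs) := by
            rw [abs_of_nonneg (sub_nonneg.2 ht.1), Real.sqrt_eq_rpow]
    have hcomp : ∫ t in xs..x, Real.sqrt (t - xs) = ∫ t in (0:ℝ)..(x - xs), Real.sqrt t := by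
      simpa using intervalIntegral.integral_comp_sub_right (fun t => Real.sqrt t) xs
    have hval : ∫ t in xs..x, C * Real.sqrt (t - xs)
        = C * ((2:ℝ)/3 * (x - xs) ^ ((3:ℝ)/2)) := by
      rw [intervalIntegral.integral_const_mul, hcomp, hsqrt_int]
      rw [Real.zero_rpow (by norm_num)]
      ring
    rw [← hftc2]
    calc ∫ t in xs..x, u' t ≤ C * ((2:ℝ)/3 * (x - xs) ^ ((3:ℝ)/2)) := hval ▸ hmono
      _ = 2/3 * C * |x - xs| ^ ((3:ℝ)/2) := by
          rw [abs_of_nonneg (sub_nonneg.2 hxge)]; ring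
  · -- x ≤ xs
    have hgc : Continuous fun t : ℝ => C * Real.sqrt (xs - t) :=
      continuous_const.mul (Real.continuous_sqrt.comp (continuous_const.sub continuous_id))
    have hu'II' : IntervalIntegrable u' volume x xs := hu'II.symm
    have hmono : ∫ t in x..xs, -u' t ≤ ∫ t in x..xs, C * Real.sqrt (xs - t) := by
      refine intervalIntegral.integral_mono_on hxle hu'II'.neg (hgc.intervalIntegrable x xs) ?_
      intro t ht
      have ht' : t ∈ Icc (0:ℝ) 1 := ⟨le_trans hx.1 ht.1, le_trans ht.2 hxs.2⟩
      calc -u' t ≤ |u' t| := neg_le_abs _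
        _ ≤ C * |t - xs| ^ ((1:ℝ)/2) := keyA t ht'
        _ = C * Real.sqrt (xs - t) := by
            rw [abs_sub_comm, abs_of_nonneg (sub_nonneg.2 ht.2), Real.sqrt_eq_rpow]
    have hcomp : ∫ t in x..xs, Real.sqrt (xs - t) = ∫ t in (0:ℝ)..(xs - x), Real.sqrt t := by
      simpa using intervalIntegral.integral_comp_sub_left (fun t => Real.sqrt t) xs
    have hval : ∫ t in x..xs, C * Real.sqrt (xs - t)
        = C * ((2:ℝ)/3 * (xs - x) ^ ((3:ℝ)/2)) := by
      rw [intervalIntegral.integral_const_mul, hcomp, hsqrt_int]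
      rw [Real.zero_rpow (by norm_num)]
      ring
    have hneg : u x - u xs = ∫ t in x..xs, -u' t := by
      rw [intervalIntegral.integral_neg, ← intervalIntegral.integral_symm, hftc2]
    calc u x - u xs = ∫ t in x..xs, -u' t := hneg
      _ ≤ C * ((2:ℝ)/3 * (xs - x) ^ ((3:ℝ)/2)) := hval ▸ hmono
      _ = 2/3 * C * |x - xs| ^ ((3:ℝ)/2) := by
          rw [abs_sub_comm, abs_of_nonneg (sub_nonneg.2 hxle)]; ring
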